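/- Let μ be the standard Gaussian measure on ℝⁿ, and let A, B be Borel sets such that the Euclidean distance between A and B is at least ε > 0 (i.e., |x − y| ≥ ε for all x ∈ A, y ∈ B). Then μ(A) · μ(B) ≤ exp(−ε²/4). -/

import Mathlib

open MeasureTheory ProbabilityTheory
open scoped ENNReal

/-- The standard Gaussian measure on `ℝⁿ`. -/
noncomputable def stdGaussian (n : ℕ) : Measure (EuclideanSpace ℝ (Fin n)) :=
  (Measure.pi (fun _ : Fin n => gaussianReal 0 1)).map (MeasurableEquiv.toLp 2 (Fin n → ℝ))

namespace GaussSep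

open Real Set

/-- The midpoint "density" appearing in the 1-d Prékopa–Leindler type argument. -/
noncomputable def Wf (x : ℝ) : ℝ := (Real.sqrt (2 * π))⁻¹ * Real.exp (-8⁻¹ * x ^ 2)

lemma Wf_pos (x : ℝ) : 0 < Wf x := by
  have h : (0:ℝ) < Real.sqrt (2 * π) := Real.sqrt_pos.2 (by positivity)
  exact mul_pos (inv_pos.2 h) (Real.exp_pos _)

lemma integral_Wf : ∫ x, Wf x = 2 := by
  have hπ : (0:ℝ) < π := Real.pi_pos
  unfold Wf
  rw [integral_const_mul, integral_gaussian]
  have h2 : (π / 8⁻¹ : ℝ) = 4 * (2 * π) := by ring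
  rw [h2, Real.sqrt_mul (by norm_num : (0:ℝ) ≤ 4)]
  have h4 : Real.sqrt 4 = 2 := by
    rw [show (4:ℝ) = 2 ^ 2 by norm_num, Real.sqrt_sq (by norm_num : (0:ℝ) ≤ 2)]
  rw [h4]
  have h5 : Real.sqrt (2 * π) ≠ 0 := ne_of_gt (Real.sqrt_pos.2 (by positivity))
  field_simp

lemma integrable_Wf : Integrable Wf := by
  have := integrable_exp_neg_mul_sq (b := 8⁻¹) (by norm_num)
  exact this.const_mul _

/-- One-dimensional Brunn–Minkowski type bound for compact sets. -/
lemma compact_sum_measure {K L : Set ℝ} (hK : IsCompact K) (hL : IsCompact L)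
    (hKn : K.Nonempty) (hLn : L.Nonempty) {U : Set ℝ}
    (hsub : ∀ k ∈ K, ∀ l ∈ L, k + l ∈ U) :
    volume K + volume L ≤ volume U := by
  set a := sSup K with ha_def
  set b := sInf L with hb_def
  have haK : a ∈ K := hK.sSup_mem hKn
  have hbL : b ∈ L := hL.sInf_mem hLn
  set K' : Set ℝ := (fun x => x + b) '' K with hK'_def
  set L' : Set ℝ := (fun x => a + x) '' L with hL'_def
  have hK'm : K' = (fun x => x + (-b)) ⁻¹' K := by
    ext x
    simp only [hK'_def, mem_image, mem_preimage]
    constructor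
    · rintro ⟨k, hk, rfl⟩; simpa using hk
    · intro hx; exact ⟨x + (-b), hx, by ring⟩
  have hL'm : L' = (fun x => (-a) + x) ⁻¹' L := by
    ext x
    simp only [hL'_def, mem_image, mem_preimage]
    constructor
    · rintro ⟨l, hl, rfl⟩; simpa using hl
    · intro hx; exact ⟨(-a) + x, hx, by ring⟩
  have hvolK' : volume K' = volume K := by rw [hK'm, measure_preimage_add_right]
  have hvolL' : volume L' = volume L := by rw [hL'm, measure_preimage_add]
  have hL'compact : IsCompact L' := hL.image (continuous_const.add continuous_id)
  have hUnion : K' ∪ L' ⊆ U := by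
    rintro x (⟨k, hk, rfl⟩ | ⟨l, hl, rfl⟩)
    · exact hsub k hk b hbL
    · exact hsub a haK l hl
  have hInter : K' ∩ L' ⊆ {a + b} := by
    rintro x ⟨⟨k, hk, rfl⟩, ⟨l, hl, hxl⟩⟩
    have h1 : k ≤ a := le_csSup hK.bddAbove hk
    have h2 : b ≤ l := csInf_le hL.bddBelow hl
    have : k + b = a + l := hxl.symm
    have hx1 : k + b ≤ a + b := by linarith
    have hx2 : a + b ≤ k + b := by linarith
    simp [le_antisymm hx1 hx2]
  calc volume K + volume L = volume K' + volume L' := by rw [hvolK', hvolL']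
    _ = volume (K' ∪ L') + volume (K' ∩ L') :=
        (measure_union_add_inter K' hL'compact.isClosed.measurableSet).symm
    _ ≤ volume U + volume ({a + b} : Set ℝ) :=
        add_le_add (measure_mono hUnion) (measure_mono hInter)
    _ = volume U := by simp

/-- Key 1-d level-set estimate and sum bound. -/
lemma sum_bound {φ χ : ℝ → ℝ≥0∞} (hφ : Measurable φ) (hχ : Measurable χ)
    (hcond : ∀ s t, φ s * χ t ≤ ENNReal.ofReal (Wf (s + t) ^ 2))
    {c : ℝ≥0∞} (hcφ : essSup φ volume = c) (hcχ : essSup χ volume = c)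
    (hc0 : c ≠ 0) (hctop : c ≠ ∞) :
    (∫⁻ s, φ s) + (∫⁻ t, χ t) ≤ 2 := by
  classical
  set f : ℝ → ℝ := fun s => (min (φ s) c).toReal with hf_def
  set g : ℝ → ℝ := fun t => (min (χ t) c).toReal with hg_def
  have hfm : Measurable f := (hφ.min measurable_const).ennreal_toReal
  have hgm : Measurable g := (hχ.min measurable_const).ennreal_toReal
  have hminφ : ∀ s, min (φ s) c ≠ ∞ := fun s =>
    ((min_le_right _ _).trans_lt (lt_top_iff_ne_top.2 hctop)).ne
  have hminχ : ∀ t, min (χ t) c ≠ ∞ := fun t =>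
    ((min_le_right _ _).trans_lt (lt_top_iff_ne_top.2 hctop)).ne
  have hfφ : ∀ s, ENNReal.ofReal (f s) = min (φ s) c := fun s =>
    ENNReal.ofReal_toReal (hminφ s)
  have hgχ : ∀ t, ENNReal.ofReal (g t) = min (χ t) c := fun t =>
    ENNReal.ofReal_toReal (hminχ t)
  have haeφ : (fun s => min (φ s) c) =ᵐ[volume] φ := by
    filter_upwards [hcφ ▸ ENNReal.ae_le_essSup φ] with s hs
    exact min_eq_left hs
  have haeχ : (fun t => min (χ t) c) =ᵐ[volume] χ := by
    filter_upwards [hcχ ▸ ENNReal.ae_le_essSup χ] with t ht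
    exact min_eq_left ht
  have hintφ : (∫⁻ s, ENNReal.ofReal (f s)) = ∫⁻ s, φ s := by
    rw [show (fun s => ENNReal.ofReal (f s)) = fun s => min (φ s) c from funext hfφ]
    exact lintegral_congr_ae haeφ
  have hintχ : (∫⁻ t, ENNReal.ofReal (g t)) = ∫⁻ t, χ t := by
    rw [show (fun t => ENNReal.ofReal (g t)) = fun t => min (χ t) c from funext hgχ]
    exact lintegral_congr_ae haeχ
  have hlcφ : (∫⁻ s, ENNReal.ofReal (f s))
      = ∫⁻ t in Ioi (0:ℝ), volume {s | t < f s} :=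
    lintegral_eq_lintegral_meas_lt volume (Filter.Eventually.of_forall fun s => ENNReal.toReal_nonneg)
      hfm.aemeasurable
  have hlcχ : (∫⁻ t, ENNReal.ofReal (g t))
      = ∫⁻ t in Ioi (0:ℝ), volume {s | t < g s} :=
    lintegral_eq_lintegral_meas_lt volume (Filter.Eventually.of_forall fun t => ENNReal.toReal_nonneg)
      hgm.aemeasurable
  -- the per-level inequality
  have hlevel : ∀ t : ℝ, 0 < t →
      volume {s | t < f s} + volume {s | t < g s} ≤ volume {x | t < Wf x} := by
    intro t ht
    by_cases htc : t < c.toReal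
    swap
    · have h1 : {s | t < f s} = ∅ := by
        ext s
        simp only [mem_setOf_eq, mem_empty_iff_false, iff_false, not_lt]
        exact le_trans (ENNReal.toReal_mono hctop (min_le_right _ _)) (not_lt.1 htc)
      have h2 : {s | t < g s} = ∅ := by
        ext s
        simp only [mem_setOf_eq, mem_empty_iff_false, iff_false, not_lt]
        exact le_trans (ENNReal.toReal_mono hctop (min_le_right _ _)) (not_lt.1 htc)
      simp [h1, h2]
    · -- main case
      have hsqrt : (0:ℝ) < Real.sqrt (2 * π) := Real.sqrt_pos.2 (by positivity)
      set ρ := Real.sqrt (-8 * Real.log (t * Real.sqrt (2 * π))) with hρ_def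
      have hWle : ∀ x : ℝ, t ≤ Wf x → x ∈ Icc (-ρ) ρ := by
        intro x hx
        rw [Wf, inv_mul_eq_div] at hx
        have h1 : t * Real.sqrt (2 * π) ≤ Real.exp (-8⁻¹ * x ^ 2) :=
          (le_div_iff₀ hsqrt).1 hx
        have h2 : Real.log (t * Real.sqrt (2 * π)) ≤ -8⁻¹ * x ^ 2 :=
          (Real.log_le_iff_le_exp (by positivity)).2 h1
        have h3 : x ^ 2 ≤ -8 * Real.log (t * Real.sqrt (2 * π)) := by nlinarith
        have h4 : |x| ≤ ρ := by
          rw [hρ_def, ← Real.sqrt_sq_eq_abs]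
          exact Real.sqrt_le_sqrt h3
        exact abs_le.1 h4
      have hIoo : Ioo (-ρ) ρ ⊆ {x | t < Wf x} := by
        intro x hx
        have hρpos : 0 < ρ := by
          rcases hx with ⟨h1, h2⟩; linarith
        have hlogpos : 0 < -8 * Real.log (t * Real.sqrt (2 * π)) := by
          by_contra hcon
          push_neg at hcon
          rw [hρ_def] at hρpos
          exact absurd (Real.sqrt_eq_zero_of_nonpos hcon) (by intro h; rw [h] at hρpos; exact lt_irrefl _ hρpos)
        have hx2 : x ^ 2 < ρ ^ 2 := by
          have habs : |x| < ρ := abs_lt.2 ⟨hx.1, hx.2⟩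
          nlinarith [abs_nonneg x, sq_abs x]
        have hρ2 : ρ ^ 2 = -8 * Real.log (t * Real.sqrt (2 * π)) := by
          rw [hρ_def]; exact Real.sq_sqrt hlogpos.le
        have h5 : Real.log (t * Real.sqrt (2 * π)) < -8⁻¹ * x ^ 2 := by nlinarith
        have h6 : t * Real.sqrt (2 * π) < Real.exp (-8⁻¹ * x ^ 2) :=
          (Real.log_lt_iff_lt_exp (by positivity)).1 h5
        show t < Wf x
        rw [Wf, inv_mul_eq_div]
        exact (lt_div_iff₀ hsqrt).2 h6
      have hposlevel : ∀ (ψ : ℝ → ℝ≥0∞), Measurable ψ → essSup ψ volume = c →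
          (∀ s, ENNReal.ofReal ((min (ψ s) c).toReal) = min (ψ s) c) →
          0 < volume {s | t < (min (ψ s) c).toReal} := by
        intro ψ hψ hcψ hofReal
        by_contra hcon
        push_neg at hcon
        have h0 : volume {s | t < (min (ψ s) c).toReal} = 0 := le_antisymm hcon zero_le
        have hae1 : ∀ᵐ s ∂(volume : Measure ℝ), (min (ψ s) c).toReal ≤ t := by
          rw [ae_iff]
          convert h0 using 2
          ext s; simp [not_le]
        have haeψ : (fun s => min (ψ s) c) =ᵐ[volume] ψ := by
          filter_upwards [hcψ ▸ ENNReal.ae_le_essSup ψ] with s hs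
          exact min_eq_left hs
        have hae2 : ∀ᵐ s ∂(volume : Measure ℝ), ψ s ≤ ENNReal.ofReal t := by
          filter_upwards [hae1, haeψ] with s h1 h2
          calc ψ s = min (ψ s) c := h2.symm
            _ = ENNReal.ofReal ((min (ψ s) c).toReal) := (hofReal s).symm
            _ ≤ ENNReal.ofReal t := ENNReal.ofReal_le_ofReal h1
        have h3 : c ≤ ENNReal.ofReal t := hcψ ▸ essSup_le_of_ae_le _ hae2
        have h4 : ENNReal.ofReal t < c :=
          (ENNReal.ofReal_lt_iff_lt_toReal ht.le hctop).2 htc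
        exact absurd h3 (not_le.2 h4)
      have hposφ : 0 < volume {s | t < f s} := hposlevel φ hφ hcφ hfφ
      have hposχ : 0 < volume {s | t < g s} := hposlevel χ hχ hcχ hgχ
      have hkey : ∀ K L : Set ℝ, IsCompact K → IsCompact L →
          K ⊆ {s | t < f s} → L ⊆ {s | t < g s} → K.Nonempty → L.Nonempty →
          volume K + volume L ≤ volume (Icc (-ρ) ρ) := by
        intro K L hK hL hKA hLB hKn hLn
        refine compact_sum_measure hK hL hKn hLn ?_
        intro k hk l hl
        have h1 : ENNReal.ofReal t < φ k := by
          have htk : t < f k := hKA hk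
          calc ENNReal.ofReal t < ENNReal.ofReal (f k) :=
                (ENNReal.ofReal_lt_ofReal_iff (lt_trans ht htk)).2 htk
            _ = min (φ k) c := hfφ k
            _ ≤ φ k := min_le_left _ _
        have h2 : ENNReal.ofReal t < χ l := by
          have htl : t < g l := hLB hl
          calc ENNReal.ofReal t < ENNReal.ofReal (g l) :=
                (ENNReal.ofReal_lt_ofReal_iff (lt_trans ht htl)).2 htl
            _ = min (χ l) c := hgχ l
            _ ≤ χ l := min_le_left _ _
        have h3 : ENNReal.ofReal (t * t) ≤ ENNReal.ofReal (Wf (k + l) ^ 2) := by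
          calc ENNReal.ofReal (t * t) = ENNReal.ofReal t * ENNReal.ofReal t :=
                ENNReal.ofReal_mul ht.le
            _ ≤ φ k * χ l := mul_le_mul' h1.le h2.le
            _ ≤ _ := hcond k l
        have h4 : t * t ≤ Wf (k + l) ^ 2 :=
          (ENNReal.ofReal_le_ofReal_iff (by positivity)).1 h3
        have h5 : t ≤ Wf (k + l) := by nlinarith [Wf_pos (k + l)]
        exact hWle _ h5
      have hIcc : volume (Icc (-ρ) ρ) ≤ volume {x | t < Wf x} := by
        rw [Real.volume_Icc, ← Real.volume_Ioo]
        exact measure_mono hIoo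
      refine le_trans ?_ hIcc
      by_contra hcon
      push_neg at hcon
      obtain ⟨a', ha', b', hb', hab⟩ :=
        ENNReal.exists_lt_add_of_lt_add hcon hposφ.ne' hposχ.ne'
      have hAm : MeasurableSet {s | t < f s} := measurableSet_lt measurable_const hfm
      have hBm : MeasurableSet {s | t < g s} := measurableSet_lt measurable_const hgm
      obtain ⟨K, hKA, hK, haK⟩ := hAm.exists_lt_isCompact ha'
      obtain ⟨L, hLB, hL, hbL⟩ := hBm.exists_lt_isCompact hb'
      have hKne : K.Nonempty :=
        nonempty_of_measure_ne_zero (lt_of_le_of_lt (zero_le : 0 ≤ a') haK).ne'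
      have hLne : L.Nonempty :=
        nonempty_of_measure_ne_zero (lt_of_le_of_lt (zero_le : 0 ≤ b') hbL).ne'
      have := hkey K L hK hL hKA hLB hKne hLne
      exact absurd this (not_le.2 (lt_of_lt_of_le hab (add_le_add haK.le hbL.le)))
  -- integrate the level inequality
  have hmeasA : Measurable fun t : ℝ => volume {s | t < f s} :=
    Antitone.measurable fun t₁ t₂ h12 =>
      measure_mono fun s hs => lt_of_le_of_lt h12 hs
  have hmeasW : Measurable fun t : ℝ => volume {x | t < Wf x} :=
    Antitone.measurable fun t₁ t₂ h12 =>
      measure_mono fun s hs => lt_of_le_of_lt h12 hs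
  have hWm : Measurable Wf := by
    have : Continuous Wf := by
      unfold Wf
      fun_prop
    exact this.measurable
  calc (∫⁻ s, φ s) + (∫⁻ t, χ t)
      = (∫⁻ t in Ioi (0:ℝ), volume {s | t < f s})
        + ∫⁻ t in Ioi (0:ℝ), volume {s | t < g s} := by
        rw [← hintφ, ← hintχ, hlcφ, hlcχ]
    _ = ∫⁻ t in Ioi (0:ℝ), (volume {s | t < f s} + volume {s | t < g s}) :=
        (lintegral_add_left hmeasA _).symm
    _ ≤ ∫⁻ t in Ioi (0:ℝ), volume {x | t < Wf x} :=
        setLIntegral_mono hmeasW fun t ht => hlevel t ht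
    _ = ∫⁻ x, ENNReal.ofReal (Wf x) :=
        (lintegral_eq_lintegral_meas_lt volume
          (Filter.Eventually.of_forall fun x => (Wf_pos x).le) hWm.aemeasurable).symm
    _ = ENNReal.ofReal (∫ x, Wf x) :=
        (ofReal_integral_eq_lintegral_ofReal integrable_Wf
          (Filter.Eventually.of_forall fun x => (Wf_pos x).le)).symm
    _ = 2 := by rw [integral_Wf]; norm_num

lemma one_dim {φ χ : ℝ → ℝ≥0∞} (hφ : Measurable φ) (hχ : Measurable χ)
    (hcond : ∀ s t, φ s * χ t ≤ ENNReal.ofReal (Wf (s + t) ^ 2)) :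
    (∫⁻ s, φ s) * (∫⁻ t, χ t) ≤ 1 := by
  by_cases h0φ : (∫⁻ s, φ s) = 0
  · simp [h0φ]
  by_cases h0χ : (∫⁻ t, χ t) = 0
  · simp [h0χ]
  have hes0φ : essSup φ volume ≠ 0 := fun h =>
    h0φ ((lintegral_eq_zero_iff hφ).2 (ENNReal.essSup_eq_zero_iff.1 h))
  have hes0χ : essSup χ volume ≠ 0 := fun h =>
    h0χ ((lintegral_eq_zero_iff hχ).2 (ENNReal.essSup_eq_zero_iff.1 h))
  have hWbound : ∀ x, Wf x ^ 2 ≤ (2 * π)⁻¹ := by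
    intro x
    have h1 : Real.exp (-8⁻¹ * x ^ 2) ≤ 1 := Real.exp_le_one_iff.2 (by nlinarith [sq_nonneg x])
    have h2 : (Real.sqrt (2 * π))⁻¹ * (Real.sqrt (2 * π))⁻¹ = (2 * π)⁻¹ := by
      rw [← mul_inv, Real.mul_self_sqrt (by positivity)]
    have h3 : (0:ℝ) < Real.sqrt (2 * π) := Real.sqrt_pos.2 (by positivity)
    have h4 : (0:ℝ) < Real.exp (-8⁻¹ * x ^ 2) := Real.exp_pos _
    have h5 : Wf x ^ 2 = ((Real.sqrt (2 * π))⁻¹ * (Real.sqrt (2 * π))⁻¹)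
          * (Real.exp (-8⁻¹ * x ^ 2) * Real.exp (-8⁻¹ * x ^ 2)) := by rw [Wf]; ring
    rw [h5, h2]
    have h6 : (0:ℝ) < (2 * π)⁻¹ := by positivity
    nlinarith [mul_le_one₀ h1 h4.le h1]
  have hfin : ∀ (ψ₁ ψ₂ : ℝ → ℝ≥0∞), (∫⁻ t, ψ₂ t) ≠ 0 →
      (∀ s t, ψ₁ s * ψ₂ t ≤ ENNReal.ofReal (Wf (s + t) ^ 2)) →
      essSup ψ₁ volume ≠ ∞ := by
    intro ψ₁ ψ₂ h0 hc
    have hne : ¬ ∀ t, ψ₂ t = 0 := by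
      intro hh
      exact h0 (by simp [hh])
    push_neg at hne
    obtain ⟨t₀, ht₀⟩ := hne
    have hbd : ∀ s, ψ₁ s ≤ ENNReal.ofReal (2 * π)⁻¹ / ψ₂ t₀ := by
      intro s
      rw [ENNReal.le_div_iff_mul_le (Or.inl ht₀) (Or.inr ENNReal.ofReal_ne_top)]
      exact (hc s t₀).trans (ENNReal.ofReal_le_ofReal (hWbound _))
    have h1 : essSup ψ₁ volume ≤ ENNReal.ofReal (2 * π)⁻¹ / ψ₂ t₀ :=
      essSup_le_of_ae_le _ (Filter.Eventually.of_forall hbd)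
    exact (h1.trans_lt (ENNReal.div_lt_top ENNReal.ofReal_ne_top ht₀)).ne
  have hfinφ : essSup φ volume ≠ ∞ := hfin φ χ h0χ hcond
  have hfinχ : essSup χ volume ≠ ∞ :=
    hfin χ φ h0φ (fun s t => by rw [mul_comm, add_comm s t] at *; exact hcond t s)
  set c₁ := essSup φ volume with hc₁
  set c₂ := essSup χ volume with hc₂
  have hc₁pos : 0 < c₁.toReal := ENNReal.toReal_pos hes0φ hfinφ
  have hc₂pos : 0 < c₂.toReal := ENNReal.toReal_pos hes0χ hfinχ
  set r : ℝ := Real.sqrt (c₂.toReal / c₁.toReal) with hr_def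
  have hrpos : 0 < r := Real.sqrt_pos.2 (div_pos hc₂pos hc₁pos)
  set φ' : ℝ → ℝ≥0∞ := fun s => ENNReal.ofReal r * φ s with hφ'_def
  set χ' : ℝ → ℝ≥0∞ := fun t => ENNReal.ofReal r⁻¹ * χ t with hχ'_def
  have hrr : ENNReal.ofReal r * ENNReal.ofReal r⁻¹ = 1 := by
    rw [← ENNReal.ofReal_mul hrpos.le, mul_inv_cancel₀ hrpos.ne', ENNReal.ofReal_one]
  have hcond' : ∀ s t, φ' s * χ' t ≤ ENNReal.ofReal (Wf (s + t) ^ 2) := by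
    intro s t
    calc φ' s * χ' t = (ENNReal.ofReal r * ENNReal.ofReal r⁻¹) * (φ s * χ t) := by
          rw [hφ'_def, hχ'_def]; ring
      _ = φ s * χ t := by rw [hrr, one_mul]
      _ ≤ _ := hcond s t
  have hessφ' : essSup φ' volume = ENNReal.ofReal r * c₁ := ENNReal.essSup_const_mul
  have hessχ' : essSup χ' volume = ENNReal.ofReal r⁻¹ * c₂ := ENNReal.essSup_const_mul
  have heq : ENNReal.ofReal r⁻¹ * c₂ = ENNReal.ofReal r * c₁ := by
    have h2 : r ^ 2 = c₂.toReal / c₁.toReal := Real.sq_sqrt (by positivity)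
    have h3 : c₂.toReal = r ^ 2 * c₁.toReal := by
      rw [h2]; field_simp
    have h4 : r⁻¹ * c₂.toReal = r * c₁.toReal := by
      rw [h3]; field_simp
    conv_lhs => rw [← ENNReal.ofReal_toReal hfinχ]
    conv_rhs => rw [← ENNReal.ofReal_toReal hfinφ]
    rw [← ENNReal.ofReal_mul (inv_nonneg.2 hrpos.le), ← ENNReal.ofReal_mul hrpos.le, h4]
  have hc0' : ENNReal.ofReal r * c₁ ≠ 0 :=
    mul_ne_zero (by simpa using hrpos) hes0φ
  have hctop' : ENNReal.ofReal r * c₁ ≠ ∞ := ENNReal.mul_ne_top ENNReal.ofReal_ne_top hfinφ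
  have hsum := sum_bound (measurable_const.mul hφ) (measurable_const.mul hχ) hcond'
    hessφ' (hessχ'.trans heq) hc0' hctop'
  have hμφ' : (∫⁻ s, φ' s) = ENNReal.ofReal r * ∫⁻ s, φ s := lintegral_const_mul _ hφ
  have hμχ' : (∫⁻ t, χ' t) = ENNReal.ofReal r⁻¹ * ∫⁻ t, χ t := lintegral_const_mul _ hχ
  set a := ∫⁻ s, φ' s with ha_def
  set b := ∫⁻ t, χ' t with hb_def
  have ha2 : a ≤ 2 := le_trans le_self_add hsum
  have hb2 : b ≤ 2 := le_trans le_add_self hsum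
  have hane : a ≠ ∞ := (ha2.trans_lt (by norm_num)).ne
  have hbne : b ≠ ∞ := (hb2.trans_lt (by norm_num)).ne
  have hxy : a.toReal + b.toReal ≤ 2 := by
    have h1 : (a + b).toReal ≤ (2 : ℝ≥0∞).toReal :=
      ENNReal.toReal_mono (by norm_num) hsum
    rwa [ENNReal.toReal_add hane hbne, ENNReal.toReal_ofNat] at h1
  have hab : a * b ≤ 1 := by
    have h1 : a.toReal * b.toReal ≤ 1 := by
      nlinarith [ENNReal.toReal_nonneg (a := a), ENNReal.toReal_nonneg (a := b),
        sq_nonneg (a.toReal - b.toReal)]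
    calc a * b = ENNReal.ofReal (a.toReal * b.toReal) := by
          rw [ENNReal.ofReal_mul ENNReal.toReal_nonneg, ENNReal.ofReal_toReal hane,
            ENNReal.ofReal_toReal hbne]
      _ ≤ ENNReal.ofReal 1 := ENNReal.ofReal_le_ofReal h1
      _ = 1 := ENNReal.ofReal_one
  calc (∫⁻ s, φ s) * ∫⁻ t, χ t
      = (ENNReal.ofReal r * ENNReal.ofReal r⁻¹) * ((∫⁻ s, φ s) * ∫⁻ t, χ t) := by
        rw [hrr, one_mul]
    _ = a * b := by rw [hμφ', hμχ']; ring
    _ ≤ 1 := hab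

lemma sqrt_two_pi_mul : (Real.sqrt (2 * π))⁻¹ * (Real.sqrt (2 * π))⁻¹ = (2 * π)⁻¹ := by
  rw [← mul_inv, Real.mul_self_sqrt (by positivity)]

lemma pdf_identity (s t : ℝ) :
    gaussianPDFReal 0 1 s * gaussianPDFReal 0 1 t * Real.exp ((s - t) ^ 2 / 4)
      = Wf (s + t) ^ 2 := by
  have hpdf : ∀ x : ℝ, gaussianPDFReal 0 1 x
      = (Real.sqrt (2 * π))⁻¹ * Real.exp (-2⁻¹ * x ^ 2) := by
    intro x
    simp only [gaussianPDFReal, NNReal.coe_one, mul_one, sub_zero]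
    congr 1
    rw [Real.exp_eq_exp]
    ring
  rw [hpdf, hpdf, Wf]
  have h1 : (Real.sqrt (2 * π))⁻¹ * Real.exp (-2⁻¹ * s ^ 2)
        * ((Real.sqrt (2 * π))⁻¹ * Real.exp (-2⁻¹ * t ^ 2)) * Real.exp ((s - t) ^ 2 / 4)
      = ((Real.sqrt (2 * π))⁻¹ * (Real.sqrt (2 * π))⁻¹)
        * (Real.exp (-2⁻¹ * s ^ 2) * Real.exp (-2⁻¹ * t ^ 2) * Real.exp ((s - t) ^ 2 / 4)) := by
    ring
  have h2 : ((Real.sqrt (2 * π))⁻¹ * Real.exp (-8⁻¹ * (s + t) ^ 2)) ^ 2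
      = ((Real.sqrt (2 * π))⁻¹ * (Real.sqrt (2 * π))⁻¹)
        * (Real.exp (-8⁻¹ * (s + t) ^ 2) * Real.exp (-8⁻¹ * (s + t) ^ 2)) := by
    ring
  rw [h1, h2, sqrt_two_pi_mul, ← Real.exp_add, ← Real.exp_add, ← Real.exp_add]
  congr 1
  ring

lemma tau_one {F G : ℝ → ℝ≥0∞} (hF : Measurable F) (hG : Measurable G)
    (hcond : ∀ s t, F s * G t ≤ ENNReal.ofReal (Real.exp ((s - t) ^ 2 / 4))) :
    (∫⁻ s, F s ∂gaussianReal 0 1) * (∫⁻ t, G t ∂gaussianReal 0 1) ≤ 1 := by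
  rw [gaussianReal_of_var_ne_zero 0 one_ne_zero,
    lintegral_withDensity_eq_lintegral_mul volume (measurable_gaussianPDF 0 1) hF,
    lintegral_withDensity_eq_lintegral_mul volume (measurable_gaussianPDF 0 1) hG]
  refine one_dim ((measurable_gaussianPDF 0 1).mul hF)
    ((measurable_gaussianPDF 0 1).mul hG) ?_
  intro s t
  have hps : (0:ℝ) ≤ gaussianPDFReal 0 1 s := gaussianPDFReal_nonneg 0 1 s
  have hpt : (0:ℝ) ≤ gaussianPDFReal 0 1 t := gaussianPDFReal_nonneg 0 1 t
  calc (gaussianPDF 0 1 * F) s * ((gaussianPDF 0 1 * G) t)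
      = (F s * G t) * (ENNReal.ofReal (gaussianPDFReal 0 1 s)
          * ENNReal.ofReal (gaussianPDFReal 0 1 t)) := by
        simp only [Pi.mul_apply, gaussianPDF]
        ring
    _ ≤ ENNReal.ofReal (Real.exp ((s - t) ^ 2 / 4))
          * (ENNReal.ofReal (gaussianPDFReal 0 1 s)
            * ENNReal.ofReal (gaussianPDFReal 0 1 t)) :=
        mul_le_mul_left (hcond s t) _
    _ = ENNReal.ofReal (gaussianPDFReal 0 1 s * gaussianPDFReal 0 1 t
          * Real.exp ((s - t) ^ 2 / 4)) := by
        rw [← ENNReal.ofReal_mul hps, ← ENNReal.ofReal_mul (by positivity)]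
        congr 1
        ring
    _ = ENNReal.ofReal (Wf (s + t) ^ 2) := by rw [pdf_identity]

theorem tau : ∀ (n : ℕ) (F G : (Fin n → ℝ) → ℝ≥0∞), Measurable F → Measurable G →
    (∀ x y, F x * G y ≤ ENNReal.ofReal (Real.exp ((∑ i, (x i - y i) ^ 2) / 4))) →
    (∫⁻ x, F x ∂Measure.pi (fun _ : Fin n => gaussianReal 0 1))
      * (∫⁻ y, G y ∂Measure.pi (fun _ : Fin n => gaussianReal 0 1)) ≤ 1 := by
  intro n
  induction n with
  | zero =>
    intro F G hF hG hcond
    rw [lintegral_unique, lintegral_unique, measure_univ, mul_one, mul_one]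
    have h := hcond default default
    simp only [Finset.univ_eq_empty, Finset.sum_empty, zero_div, Real.exp_zero,
      ENNReal.ofReal_one] at h
    convert h using 3 <;> apply Subsingleton.elim
  | succ n ih =>
    intro F G hF hG hcond
    set e := MeasurableEquiv.piFinSuccAbove (fun _ : Fin (n + 1) => ℝ) 0 with he_def
    set γ1 : Measure ℝ := gaussianReal 0 1 with hγ1
    set γn : Measure (Fin n → ℝ) := Measure.pi (fun _ : Fin n => gaussianReal 0 1) with hγn
    have hsymm : ∀ p : ℝ × (Fin n → ℝ), e.symm p = Fin.cons p.1 p.2 := by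
      intro p
      simp [he_def, MeasurableEquiv.piFinSuccAbove, Fin.consEquiv]
    have hmp : MeasurePreserving e
        (Measure.pi (fun _ : Fin (n + 1) => gaussianReal 0 1)) (γ1.prod γn) :=
      MeasureTheory.measurePreserving_piFinSuccAbove (fun _ : Fin (n + 1) => gaussianReal 0 1) 0
    have hint : ∀ (H : (Fin (n + 1) → ℝ) → ℝ≥0∞), Measurable H →
        (∫⁻ x, H x ∂Measure.pi (fun _ : Fin (n + 1) => gaussianReal 0 1))
          = ∫⁻ s, ∫⁻ x, H (Fin.cons s x) ∂γn ∂γ1 := by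
      intro H hH
      have h1 : Measurable (H ∘ e.symm) := hH.comp e.symm.measurable
      have h2 := hmp.lintegral_comp h1
      have h3 : (∫⁻ a, (H ∘ e.symm) (e a)
          ∂Measure.pi (fun _ : Fin (n + 1) => gaussianReal 0 1))
          = ∫⁻ x, H x ∂Measure.pi (fun _ : Fin (n + 1) => gaussianReal 0 1) := by
        refine lintegral_congr fun a => ?_
        simp
      rw [← h3, h2, lintegral_prod _ h1.aemeasurable]
      refine lintegral_congr fun s => lintegral_congr fun x => ?_
      simp [Function.comp, hsymm]
    have hconssum : ∀ (s t : ℝ) (x y : Fin n → ℝ),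
        (∑ i, ((Fin.cons s x : Fin (n + 1) → ℝ) i - (Fin.cons t y : Fin (n + 1) → ℝ) i) ^ 2)
          = (s - t) ^ 2 + ∑ j, (x j - y j) ^ 2 := by
      intro s t x y
      rw [Fin.sum_univ_succ]
      simp
    set H : ℝ → ℝ≥0∞ := fun s => ∫⁻ x, F (Fin.cons s x) ∂γn with hH_def
    set K : ℝ → ℝ≥0∞ := fun t => ∫⁻ y, G (Fin.cons t y) ∂γn with hK_def
    have hFcons : Measurable fun p : ℝ × (Fin n → ℝ) => F (Fin.cons p.1 p.2) := by
      have : (fun p : ℝ × (Fin n → ℝ) => F (Fin.cons p.1 p.2)) = F ∘ e.symm := by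
        funext p; rw [Function.comp_apply, hsymm]
      rw [this]
      exact hF.comp e.symm.measurable
    have hGcons : Measurable fun p : ℝ × (Fin n → ℝ) => G (Fin.cons p.1 p.2) := by
      have : (fun p : ℝ × (Fin n → ℝ) => G (Fin.cons p.1 p.2)) = G ∘ e.symm := by
        funext p; rw [Function.comp_apply, hsymm]
      rw [this]
      exact hG.comp e.symm.measurable
    have hHm : Measurable H := hFcons.lintegral_prod_right'
    have hKm : Measurable K := hGcons.lintegral_prod_right'
    have hHK : ∀ s t, H s * K t ≤ ENNReal.ofReal (Real.exp ((s - t) ^ 2 / 4)) := by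
      intro s t
      set c8 : ℝ≥0∞ := ENNReal.ofReal (Real.exp (-(s - t) ^ 2 / 8)) with hc8
      have hc8c8 : c8 * c8 = ENNReal.ofReal (Real.exp (-(s - t) ^ 2 / 4)) := by
        rw [hc8, ← ENNReal.ofReal_mul (Real.exp_pos _).le, ← Real.exp_add]
        congr 2
        ring
      have hih := ih (fun x => F (Fin.cons s x) * c8) (fun y => G (Fin.cons t y) * c8)
        ((hFcons.comp (measurable_prodMk_left (x := s)) |>.mul measurable_const))
        ((hGcons.comp (measurable_prodMk_left (x := t)) |>.mul measurable_const))
        ?_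
      · have h1 : (∫⁻ x, F (Fin.cons s x) * c8 ∂γn) = H s * c8 := lintegral_mul_const _
          (hFcons.comp (measurable_prodMk_left (x := s)))
        have h2 : (∫⁻ y, G (Fin.cons t y) * c8 ∂γn) = K t * c8 := lintegral_mul_const _
          (hGcons.comp (measurable_prodMk_left (x := t)))
        rw [h1, h2] at hih
        have h3 : H s * K t * ENNReal.ofReal (Real.exp (-(s - t) ^ 2 / 4)) ≤ 1 := by
          calc H s * K t * ENNReal.ofReal (Real.exp (-(s - t) ^ 2 / 4))
              = H s * c8 * (K t * c8) := by rw [← hc8c8]; ring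
            _ ≤ 1 := hih
        have hone : ENNReal.ofReal (Real.exp (-(s - t) ^ 2 / 4))
            * ENNReal.ofReal (Real.exp ((s - t) ^ 2 / 4)) = 1 := by
          rw [← ENNReal.ofReal_mul (Real.exp_pos _).le, ← Real.exp_add]
          have hz : -(s - t) ^ 2 / 4 + (s - t) ^ 2 / 4 = 0 := by ring
          rw [hz, Real.exp_zero, ENNReal.ofReal_one]
        calc H s * K t
            = H s * K t * (ENNReal.ofReal (Real.exp (-(s - t) ^ 2 / 4))
              * ENNReal.ofReal (Real.exp ((s - t) ^ 2 / 4))) := by rw [hone, mul_one]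
          _ = (H s * K t * ENNReal.ofReal (Real.exp (-(s - t) ^ 2 / 4)))
              * ENNReal.ofReal (Real.exp ((s - t) ^ 2 / 4)) := by ring
          _ ≤ 1 * ENNReal.ofReal (Real.exp ((s - t) ^ 2 / 4)) := mul_le_mul_left h3 _
          _ = _ := one_mul _
      · intro x y
        calc F (Fin.cons s x) * c8 * (G (Fin.cons t y) * c8)
            = F (Fin.cons s x) * G (Fin.cons t y) * (c8 * c8) := by ring
          _ ≤ ENNReal.ofReal (Real.exp ((∑ i, (Fin.cons s x i - Fin.cons t y i) ^ 2) / 4))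
              * ENNReal.ofReal (Real.exp (-(s - t) ^ 2 / 4)) := by
              rw [hc8c8]
              exact mul_le_mul_left (hcond _ _) _
          _ = ENNReal.ofReal (Real.exp ((∑ j, (x j - y j) ^ 2) / 4)) := by
              rw [← ENNReal.ofReal_mul (Real.exp_pos _).le, ← Real.exp_add, hconssum s t x y]
              congr 2
              ring
    have hmain := tau_one hHm hKm hHK
    rw [hint F hF, hint G hG]
    exact hmain

end GaussSep


/-- If `A` and `B` are Borel sets at Euclidean distance at least `ε > 0` from each other,
then `μ(A)·μ(B) ≤ exp(−ε²/4)` for the standard Gaussian measure `μ` on `ℝⁿ`. -/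
theorem gaussian_separation_bound (n : ℕ) (A B : Set (EuclideanSpace ℝ (Fin n)))
    (hA : MeasurableSet A) (hB : MeasurableSet B) (ε : ℝ) (hε : 0 < ε)
    (hsep : ∀ x ∈ A, ∀ y ∈ B, ε ≤ ‖x - y‖) :
    stdGaussian n A * stdGaussian n B ≤ ENNReal.ofReal (Real.exp (-(ε ^ 2) / 4)) := by
  classical
  set c : ℝ≥0∞ := ENNReal.ofReal (Real.exp (ε ^ 2 / 4)) with hc_def
  set F : EuclideanSpace ℝ (Fin n) → ℝ≥0∞ := A.indicator (fun _ => 1) with hF_def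
  set G : EuclideanSpace ℝ (Fin n) → ℝ≥0∞ := B.indicator (fun _ => c) with hG_def
  have hFm : Measurable F := measurable_const.indicator hA
  have hGm : Measurable G := measurable_const.indicator hB
  have hcond : ∀ x y : EuclideanSpace ℝ (Fin n),
      F x * G y ≤ ENNReal.ofReal (Real.exp ((∑ i, (x i - y i) ^ 2) / 4)) := by
    intro x y
    by_cases hx : x ∈ A
    · by_cases hy : y ∈ B
      · have hsum : ε ^ 2 ≤ ∑ i, (x i - y i) ^ 2 := by
          have h1 : ε ≤ ‖x - y‖ := hsep x hx y hy
          have h2 : ‖x - y‖ = Real.sqrt (∑ i, ‖(x - y) i‖ ^ 2) :=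
            EuclideanSpace.norm_eq _
          have h3 : ∀ i, ‖(x - y) i‖ ^ 2 = (x i - y i) ^ 2 := by
            intro i
            rw [show (x - y) i = x i - y i from rfl, Real.norm_eq_abs, sq_abs]
          have h4 : ε ^ 2 ≤ ‖x - y‖ ^ 2 := pow_le_pow_left₀ hε.le h1 2
          rwa [h2, Real.sq_sqrt (by positivity), Finset.sum_congr rfl fun i _ => h3 i] at h4
        have hFx : F x = 1 := by rw [hF_def]; exact Set.indicator_of_mem hx _
        have hGy : G y = c := by rw [hG_def]; exact Set.indicator_of_mem hy _
        rw [hFx, hGy, one_mul, hc_def]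
        apply ENNReal.ofReal_le_ofReal
        apply Real.exp_le_exp.2
        linarith
      · have hGy : G y = 0 := by rw [hG_def]; exact Set.indicator_of_notMem hy _
        rw [hGy, mul_zero]
        exact zero_le
    · have hFx : F x = 0 := by rw [hF_def]; exact Set.indicator_of_notMem hx _
      rw [hFx, zero_mul]
      exact zero_le
  have htau := GaussSep.tau n (F ∘ WithLp.toLp 2) (G ∘ WithLp.toLp 2)
    (hFm.comp (MeasurableEquiv.toLp 2 (Fin n → ℝ)).measurable)
    (hGm.comp (MeasurableEquiv.toLp 2 (Fin n → ℝ)).measurable) (fun x y => hcond _ _)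
  have hmap : ∀ H : EuclideanSpace ℝ (Fin n) → ℝ≥0∞, Measurable H →
      (∫⁻ x, H x ∂stdGaussian n)
        = ∫⁻ x, (H ∘ WithLp.toLp 2) x ∂Measure.pi (fun _ : Fin n => gaussianReal 0 1) := by
    intro H hH
    rw [_root_.stdGaussian, lintegral_map hH (MeasurableEquiv.toLp 2 (Fin n → ℝ)).measurable]
    rfl
  have hFi : (∫⁻ x, F x ∂stdGaussian n) = stdGaussian n A := by
    rw [hF_def]
    exact lintegral_indicator_one hA
  have hGi : (∫⁻ y, G y ∂stdGaussian n) = c * stdGaussian n B := by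
    rw [hG_def, lintegral_indicator hB, setLIntegral_const]
  have htau' : stdGaussian n A * (c * stdGaussian n B) ≤ 1 := by
    rw [← hFi, ← hGi, hmap F hFm, hmap G hGm]
    exact htau
  set c' : ℝ≥0∞ := ENNReal.ofReal (Real.exp (-(ε ^ 2) / 4)) with hc'_def
  have hcc' : c * c' = 1 := by
    rw [hc_def, hc'_def, ← ENNReal.ofReal_mul (Real.exp_pos _).le, ← Real.exp_add]
    have hz : ε ^ 2 / 4 + -(ε ^ 2) / 4 = 0 := by ring
    rw [hz, Real.exp_zero, ENNReal.ofReal_one]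
  calc stdGaussian n A * stdGaussian n B
      = stdGaussian n A * stdGaussian n B * (c * c') := by rw [hcc', mul_one]
    _ = (stdGaussian n A * (c * stdGaussian n B)) * c' := by ring
    _ ≤ 1 * c' := mul_le_mul_left htau' _
    _ = c' := one_mul _
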